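/- Let U be an open subset of a finite-dimensional real normed vector space E, let v : U → E be a C² vector field with a zero at z ∈ U, and set A = Dv(z) (the Fréchet derivative of v at z). Let f : U → ℝ be a C² function with Df(z) = 0, and define σ : U → ℝ as the directional derivative σ(x) = Df(x)(v(x)). Then Dσ(z) = 0, and the second derivative (Hessian) of σ at z satisfies D²σ(z)(u, u) = 2·D²f(z)(A u, u) for every u ∈ E. -/

import Mathlib

open Asymptotics

/-- If `c` is continuous at `z`, `u` has derivative `A` at `z` and `u z = 0`, then
`x ↦ c x (u x)` has derivative `(c z).comp A` at `z`. -/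
lemma aux_clm_apply_zero {E F : Type*} [NormedAddCommGroup E] [NormedSpace ℝ E]
    [NormedAddCommGroup F] [NormedSpace ℝ F]
    {c : E → (E →L[ℝ] F)} {u : E → E} {A : E →L[ℝ] E} {z : E}
    (hc : ContinuousAt c z) (hu : HasFDerivAt u A z) (huz : u z = 0) :
    HasFDerivAt (fun x => c x (u x)) ((c z).comp A) z := by
  rw [hasFDerivAt_iff_isLittleO_nhds_zero] at hu ⊢
  have h1 : (fun h : E => (c z) (u (z + h) - u z - A h)) =o[nhds 0] fun h => h :=
    ((c z).isBigO_comp _ _).trans_isLittleO hu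
  have hO : (fun h : E => u (z + h)) =O[nhds 0] fun h => h := by
    have h := hu.isBigO.add (A.isBigO_comp (fun h : E => h) (nhds 0))
    refine h.congr' (Filter.Eventually.of_forall fun h => ?_) (Filter.EventuallyEq.refl _ _)
    simp [huz]
  have hc0 : (fun h : E => c (z + h) - c z) =o[nhds 0] (fun _ => (1 : ℝ)) := by
    rw [isLittleO_one_iff]
    have h1 : Filter.Tendsto (fun h : E => z + h) (nhds 0) (nhds z) := by
      simpa using (continuous_add_left z).tendsto (0 : E)
    have h2 : Filter.Tendsto (fun h : E => c (z + h)) (nhds 0) (nhds (c z)) :=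
      hc.tendsto.comp h1
    have h3 : Filter.Tendsto (fun h : E => c (z + h) - c z) (nhds 0) (nhds (c z - c z)) :=
      h2.sub tendsto_const_nhds
    simpa using h3
  have h2 : (fun h : E => (c (z + h) - c z) (u (z + h))) =o[nhds 0] fun h => h := by
    have hb : (fun h : E => (c (z + h) - c z) (u (z + h)))
        =O[nhds 0] fun h => ‖c (z + h) - c z‖ * ‖u (z + h)‖ := by
      apply isBigO_of_le
      intro h
      calc ‖(c (z + h) - c z) (u (z + h))‖ ≤ ‖c (z + h) - c z‖ * ‖u (z + h)‖ :=
            (c (z + h) - c z).le_opNorm _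
        _ ≤ ‖‖c (z + h) - c z‖ * ‖u (z + h)‖‖ := le_abs_self _
    have := hc0.norm_left.mul_isBigO hO.norm_norm
    simp only [one_mul] at this
    exact hb.trans_isLittleO this.of_norm_right
  have := h2.add h1
  refine this.congr' (Filter.Eventually.of_forall fun h => ?_) (Filter.EventuallyEq.refl _ _)
  simp only [huz, map_sub, map_zero, ContinuousLinearMap.sub_apply,
    ContinuousLinearMap.comp_apply, sub_zero]
  abel

theorem stmt_2 {E : Type*} [NormedAddCommGroup E] [NormedSpace ℝ E]
    [FiniteDimensional ℝ E]
    (U : Set E) (hU : IsOpen U) (z : E) (hz : z ∈ U)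
    (v : E → E) (hv : ContDiffOn ℝ 2 v U) (hvz : v z = 0)
    (f : E → ℝ) (hf : ContDiffOn ℝ 2 f U) (hfz : fderiv ℝ f z = 0)
    (σ : E → ℝ) (hσ : ∀ x ∈ U, σ x = fderiv ℝ f x (v x)) :
    fderiv ℝ σ z = 0 ∧
    ∀ u : E, fderiv ℝ (fderiv ℝ σ) z u u
      = 2 * fderiv ℝ (fderiv ℝ f) z (fderiv ℝ v z u) u := by
  set g : E → (E →L[ℝ] ℝ) := fun x => fderiv ℝ f x with hg_def
  set w : E → (E →L[ℝ] E) := fun x => fderiv ℝ v x with hw_def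
  have hg : ContDiffOn ℝ 1 g U := hf.fderiv_of_isOpen hU (by norm_num)
  have hw : ContDiffOn ℝ 1 w U := hv.fderiv_of_isOpen hU (by norm_num)
  have hgd : ∀ x ∈ U, DifferentiableAt ℝ g x := fun x hx =>
    ((hg.differentiableOn one_ne_zero) x hx).differentiableAt (hU.mem_nhds hx)
  have hwd : ∀ x ∈ U, DifferentiableAt ℝ w x := fun x hx =>
    ((hw.differentiableOn one_ne_zero) x hx).differentiableAt (hU.mem_nhds hx)
  have hvd : ∀ x ∈ U, DifferentiableAt ℝ v x := fun x hx =>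
    ((hv.differentiableOn (by norm_num)) x hx).differentiableAt (hU.mem_nhds hx)
  have hfd : ∀ x ∈ U, DifferentiableAt ℝ f x := fun x hx =>
    ((hf.differentiableOn (by norm_num)) x hx).differentiableAt (hU.mem_nhds hx)
  set A : E →L[ℝ] E := fderiv ℝ v z with hA_def
  set B : E →L[ℝ] E →L[ℝ] ℝ := fderiv ℝ g z with hB_def
  -- the function φ agrees with σ near every point of U
  have hσφ : ∀ x ∈ U, σ =ᶠ[nhds x] fun y => g y (v y) := fun x hx =>
    Filter.eventuallyEq_of_mem (hU.mem_nhds hx) (fun y hy => hσ y hy)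
  -- derivative of σ on U
  set F : E → (E →L[ℝ] ℝ) := fun x => (g x).comp (w x) + (fderiv ℝ g x).flip (v x) with hF_def
  have hder : ∀ x ∈ U, HasFDerivAt σ (F x) x := by
    intro x hx
    have h1 : HasFDerivAt (fun y => g y (v y))
        ((g x).comp (fderiv ℝ v x) + (fderiv ℝ g x).flip (v x)) x :=
      (hgd x hx).hasFDerivAt.clm_apply (hvd x hx).hasFDerivAt
    exact h1.congr_of_eventuallyEq (hσφ x hx)
  have hDσ : ∀ x ∈ U, fderiv ℝ σ x = F x := fun x hx => (hder x hx).fderiv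
  have hgz : g z = 0 := hfz
  have hFz0 : F z = 0 := by
    simp [hF_def, hgz, hvz]
  constructor
  · rw [hDσ z hz, hFz0]
  -- second derivative
  intro u
  -- fderiv σ agrees with F near z
  have hev : fderiv ℝ σ =ᶠ[nhds z] F :=
    Filter.eventuallyEq_of_mem (hU.mem_nhds hz) hDσ
  -- derivative of F at z
  have hcont : ContinuousAt (fun x => (fderiv ℝ g x).flip) z := by
    have : ContinuousOn (fun x => fderiv ℝ g x) U := by
      have := hg.fderiv_of_isOpen (m := 0) hU (by norm_num)
      exact this.continuousOn
    have h1 : ContinuousAt (fun x => fderiv ℝ g x) z :=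
      this.continuousAt (hU.mem_nhds hz)
    exact ((ContinuousLinearMap.flipₗᵢ ℝ E E ℝ).continuous.continuousAt).comp h1
  have hF1 : HasFDerivAt (fun x => (fderiv ℝ g x).flip (v x))
      ((B.flip).comp A) z :=
    aux_clm_apply_zero hcont (hvd z hz).hasFDerivAt hvz
  have hF2 : HasFDerivAt (fun x => (g x).comp (w x))
      ((ContinuousLinearMap.compL ℝ E E ℝ (g z)).comp (fderiv ℝ w z) +
        ((ContinuousLinearMap.compL ℝ E E ℝ).flip (w z)).comp B) z :=
    (hgd z hz).hasFDerivAt.clm_comp (hwd z hz).hasFDerivAt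
  have hF : HasFDerivAt F
      (((ContinuousLinearMap.compL ℝ E E ℝ (g z)).comp (fderiv ℝ w z) +
        ((ContinuousLinearMap.compL ℝ E E ℝ).flip (w z)).comp B) + (B.flip).comp A) z :=
    hF2.add hF1
  have hDDσ : fderiv ℝ (fderiv ℝ σ) z =
      (((ContinuousLinearMap.compL ℝ E E ℝ (g z)).comp (fderiv ℝ w z) +
        ((ContinuousLinearMap.compL ℝ E E ℝ).flip (w z)).comp B) + (B.flip).comp A) := by
    rw [hev.fderiv_eq]
    exact hF.fderiv
  -- symmetry of B
  have hsymm : ∀ a b : E, B a b = B b a := by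
    intro a b
    apply second_derivative_symmetric_of_eventually (f := f) (f' := g) (x := z)
    · filter_upwards [hU.mem_nhds hz] with y hy using (hfd y hy).hasFDerivAt
    · exact (hgd z hz).hasFDerivAt
  rw [hDDσ]
  simp only [ContinuousLinearMap.add_apply, ContinuousLinearMap.comp_apply,
    ContinuousLinearMap.flip_apply, ContinuousLinearMap.compL_apply, hgz,
    ContinuousLinearMap.zero_comp, ContinuousLinearMap.zero_apply]
  rw [hsymm u (A u)]
  ring
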